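/- Let M be an n×m matrix with strictly positive entries and let r ∈ ℝ^n, c ∈ ℝ^m be probability vectors with strictly positive entries. Then there exists a unique minimizer Φ(M,r,c) of D_KL(P‖M) over P ∈ U(r,c); moreover this minimizer has strictly positive entries and is a diagonal scaling of M, i.e., Φ(M,r,c)_ij = u_i · M_ij · v_j for some strictly positive vectors u, v. -/

import Mathlib

open Real Finset

/-- Relative entropy `D_KL(P‖M) = Σ_{ij} P_ij log(P_ij/M_ij)` (real-valued version,
with `0 log 0 = 0`; adequate when `M` has strictly positive entries). -/
noncomputable def klReal {n m : ℕ} (P M : Matrix (Fin n) (Fin m) ℝ) : ℝ :=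
  ∑ i, ∑ j, P i j * Real.log (P i j / M i j)

/-- `U(r,c)`: nonnegative matrices with row sums `r` and column sums `c`. -/
def transportPolytope {n m : ℕ} (r : Fin n → ℝ) (c : Fin m → ℝ) :
    Set (Matrix (Fin n) (Fin m) ℝ) :=
  {P | (∀ i j, 0 ≤ P i j) ∧ (∀ i, ∑ j, P i j = r i) ∧ (∀ j, ∑ i, P i j = c j)}

/-- The single-entry integrand `x ↦ x log(x/m)`. -/
noncomputable def hfun (m x : ℝ) : ℝ := x * Real.log (x / m)

lemma klReal_eq {n m : ℕ} (P M : Matrix (Fin n) (Fin m) ℝ) :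
    klReal P M = ∑ i, ∑ j, hfun (M i j) (P i j) := rfl

lemma hfun_eq (m : ℝ) (hm : 0 < m) (x : ℝ) : hfun m x = x * Real.log x - x * Real.log m := by
  rcases eq_or_ne x 0 with h | h
  · simp [hfun, h]
  · rw [hfun, Real.log_div h hm.ne']; ring

lemma continuous_hfun {m : ℝ} (hm : 0 < m) : Continuous (hfun m) := by
  have : (hfun m) = fun x => m * ((x / m) * Real.log (x / m)) := by
    funext x; rw [hfun]; field_simp
  rw [this]
  exact continuous_const.mul (Real.continuous_mul_log.comp (continuous_id.div_const m))

lemma hasDerivAt_hfun {m x : ℝ} (hm : 0 < m) (hx : 0 < x) :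
    HasDerivAt (hfun m) (Real.log (x / m) + 1) x := by
  have h1 : HasDerivAt (fun x : ℝ => x * Real.log x - x * Real.log m)
      ((Real.log x + 1) - 1 * Real.log m) x :=
    (Real.hasDerivAt_mul_log hx.ne').sub ((hasDerivAt_id x).mul_const (Real.log m))
  have he : ∀ y, hfun m y = y * Real.log y - y * Real.log m := hfun_eq m hm
  rw [Real.log_div hx.ne' hm.ne']
  have h2 : Real.log x - Real.log m + 1 = (Real.log x + 1) - 1 * Real.log m := by ring
  rw [h2, funext he]
  exact h1

lemma hfun_comb {m p q t : ℝ} (hm : 0 < m) (hp : 0 ≤ p) (hq : 0 ≤ q)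
    (ht : 0 ≤ t) (ht1 : t ≤ 1) :
    hfun m ((1 - t) * p + t * q) ≤ (1 - t) * hfun m p + t * hfun m q := by
  have key := Real.convexOn_mul_log.2 (Set.mem_Ici.2 (div_nonneg hp hm.le))
    (Set.mem_Ici.2 (div_nonneg hq hm.le)) (by linarith : (0:ℝ) ≤ 1 - t) ht (by ring)
  simp only [smul_eq_mul] at key
  have e : ∀ x : ℝ, hfun m x = m * ((x / m) * Real.log (x / m)) := by
    intro x; rw [hfun]; field_simp
  have e2 : ((1 - t) * p + t * q) / m = (1 - t) * (p / m) + t * (q / m) := by ring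
  rw [e, e, e, e2]
  nlinarith [key, hm]

lemma hfun_strict {m p q : ℝ} (hm : 0 < m) (hp : 0 ≤ p) (hq : 0 ≤ q) (hpq : p ≠ q) :
    hfun m ((p + q) / 2) < hfun m p / 2 + hfun m q / 2 := by
  have key := Real.strictConvexOn_mul_log.2 (Set.mem_Ici.2 (div_nonneg hp hm.le))
    (Set.mem_Ici.2 (div_nonneg hq hm.le))
    (by intro h; exact hpq (by field_simp at h; linarith [h]) : p / m ≠ q / m)
    (by norm_num : (0:ℝ) < 1/2) (by norm_num : (0:ℝ) < 1/2) (by norm_num)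
  simp only [smul_eq_mul] at key
  have e : ∀ x : ℝ, hfun m x = m * ((x / m) * Real.log (x / m)) := by
    intro x; rw [hfun]; field_simp
  have e2 : ((p + q) / 2) / m = (1/2 : ℝ) * (p / m) + (1/2 : ℝ) * (q / m) := by ring
  rw [e, e, e, e2]
  nlinarith [key, hm]

lemma hfun_mid_le {m p q : ℝ} (hm : 0 < m) (hp : 0 ≤ p) (hq : 0 ≤ q) :
    hfun m ((p + q) / 2) ≤ hfun m p / 2 + hfun m q / 2 := by
  rcases eq_or_ne p q with h | h
  · subst h; rw [show (p + p) / 2 = p by ring]; linarith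
  · exact (hfun_strict hm hp hq h).le

lemma hfun_smul {m q t : ℝ} (hm : 0 < m) (hq : 0 < q) (ht : 0 < t) :
    hfun m (t * q) = t * hfun m q + t * q * Real.log t := by
  rw [hfun, hfun]
  have : t * q / m = t * (q / m) := by ring
  rw [this, Real.log_mul ht.ne' (div_pos hq hm).ne']
  ring

lemma exists_min {n m : ℕ} (M : Matrix (Fin n) (Fin m) ℝ)
    (hM : ∀ i j, 0 < M i j) (r : Fin n → ℝ) (c : Fin m → ℝ)
    (hr : ∀ i, 0 < r i) (hc : ∀ j, 0 < c j)
    (hr1 : ∑ i, r i = 1) (hc1 : ∑ j, c j = 1) :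
    ∃ P ∈ transportPolytope r c, ∀ Q ∈ transportPolytope r c, klReal P M ≤ klReal Q M := by
  have hRmem : (fun i j => r i * c j) ∈ transportPolytope r c := by
    refine ⟨fun i j => (mul_pos (hr i) (hc j)).le, fun i => ?_, fun j => ?_⟩
    · rw [← Finset.mul_sum, hc1, mul_one]
    · rw [← Finset.sum_mul, hr1, one_mul]
  have hclosed : IsClosed (transportPolytope r c) := by
    have h1 : IsClosed {P : Matrix (Fin n) (Fin m) ℝ | ∀ i j, 0 ≤ P i j} := by
      simp only [Set.setOf_forall]
      exact isClosed_iInter fun i => isClosed_iInter fun j =>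
        isClosed_le continuous_const ((continuous_apply j).comp (continuous_apply i))
    have h2 : IsClosed {P : Matrix (Fin n) (Fin m) ℝ | ∀ i, ∑ j, P i j = r i} := by
      simp only [Set.setOf_forall]
      exact isClosed_iInter fun i => isClosed_eq
        (continuous_finset_sum _ fun j _ => (continuous_apply j).comp (continuous_apply i))
        continuous_const
    have h3 : IsClosed {P : Matrix (Fin n) (Fin m) ℝ | ∀ j, ∑ i, P i j = c j} := by
      simp only [Set.setOf_forall]
      exact isClosed_iInter fun j => isClosed_eq
        (continuous_finset_sum _ fun i _ => (continuous_apply j).comp (continuous_apply i))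
        continuous_const
    exact (h1.inter (h2.inter h3) : _)
  have hsub : transportPolytope r c ⊆
      Set.univ.pi (fun _ : Fin n => Set.univ.pi fun _ : Fin m => Set.Icc (0:ℝ) 1) := by
    rintro P ⟨hP0, hPr, _⟩ i _ j _
    refine ⟨hP0 i j, ?_⟩
    calc P i j ≤ ∑ j', P i j' :=
          Finset.single_le_sum (fun j' _ => hP0 i j') (mem_univ j)
      _ = r i := hPr i
      _ ≤ ∑ i', r i' := Finset.single_le_sum (fun i' _ => (hr i').le) (mem_univ i)
      _ = 1 := hr1
  have hcompact : IsCompact (transportPolytope r c) :=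
    (isCompact_univ_pi fun _ => isCompact_univ_pi fun _ => isCompact_Icc).of_isClosed_subset
      hclosed hsub
  have hcont : Continuous fun P : Matrix (Fin n) (Fin m) ℝ => klReal P M := by
    simp only [klReal_eq]
    exact continuous_finset_sum _ fun i _ => continuous_finset_sum _ fun j _ =>
      (continuous_hfun (hM i j)).comp ((continuous_apply j).comp (continuous_apply i))
  obtain ⟨P, hPK, hPmin⟩ := hcompact.exists_isMinOn ⟨_, hRmem⟩ hcont.continuousOn
  exact ⟨P, hPK, fun Q hQ => hPmin hQ⟩

lemma minimizer_pos {n m : ℕ} (M : Matrix (Fin n) (Fin m) ℝ)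
    (hM : ∀ i j, 0 < M i j) (r : Fin n → ℝ) (c : Fin m → ℝ)
    (hr : ∀ i, 0 < r i) (hc : ∀ j, 0 < c j)
    (hr1 : ∑ i, r i = 1) (hc1 : ∑ j, c j = 1)
    (P : Matrix (Fin n) (Fin m) ℝ) (hPK : P ∈ transportPolytope r c)
    (hPmin : ∀ Q ∈ transportPolytope r c, klReal P M ≤ klReal Q M) :
    ∀ i j, 0 < P i j := by
  obtain ⟨hP0, hPr, hPc⟩ := hPK
  by_contra hcon
  push_neg at hcon
  obtain ⟨i0, j0, hij0⟩ := hcon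
  have hPz : P i0 j0 = 0 := le_antisymm hij0 (hP0 i0 j0)
  set R : Matrix (Fin n) (Fin m) ℝ := fun i j => r i * c j with hR
  have hRpos : ∀ i j, 0 < R i j := fun i j => mul_pos (hr i) (hc j)
  have hRmem : R ∈ transportPolytope r c := by
    refine ⟨fun i j => (hRpos i j).le, fun i => ?_, fun j => ?_⟩
    · rw [hR]; rw [← Finset.mul_sum, hc1, mul_one]
    · rw [hR]; rw [← Finset.sum_mul, hr1, one_mul]
  set S : ℝ := ∑ i, ∑ j, (if P i j = 0 then R i j else 0) with hS
  have hSpos : 0 < S := by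
    have : 0 < ∑ j, (if P i0 j = 0 then R i0 j else 0) := by
      refine Finset.sum_pos' (fun j _ => by split <;> simp [(hRpos i0 j).le, le_refl]) ⟨j0, mem_univ j0, ?_⟩
      simp [hPz, hRpos i0 j0]
    refine Finset.sum_pos' (fun i _ => Finset.sum_nonneg fun j _ => by split <;> simp [(hRpos i j).le, le_refl])
      ⟨i0, mem_univ i0, this⟩
  have hkey : ∀ t : ℝ, 0 < t → t < 1 →
      0 ≤ klReal R M - klReal P M + S * Real.log t := by
    intro t ht ht1
    set Pt : Matrix (Fin n) (Fin m) ℝ := fun i j => (1 - t) * P i j + t * R i j with hPt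
    have hPtmem : Pt ∈ transportPolytope r c := by
      refine ⟨fun i j => add_nonneg (mul_nonneg (by linarith) (hP0 i j)) (mul_nonneg ht.le (hRpos i j).le), fun i => ?_, fun j => ?_⟩
      · simp only [hPt]
        rw [Finset.sum_add_distrib, ← Finset.mul_sum, ← Finset.mul_sum, hPr i,
          hRmem.2.1 i]; ring
      · simp only [hPt]
        rw [Finset.sum_add_distrib, ← Finset.mul_sum, ← Finset.mul_sum, hPc j,
          hRmem.2.2 j]; ring
    have hbound : klReal Pt M ≤ (1 - t) * klReal P M + t * klReal R M + t * Real.log t * S := by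
      rw [klReal_eq, klReal_eq, klReal_eq, hS]
      have : ∀ i j, hfun (M i j) (Pt i j) ≤ (1 - t) * hfun (M i j) (P i j)
          + t * hfun (M i j) (R i j)
          + t * Real.log t * (if P i j = 0 then R i j else 0) := by
        intro i j
        rcases eq_or_ne (P i j) 0 with h | h
        · have : Pt i j = t * R i j := by rw [hPt]; simp [h]
          rw [this, hfun_smul (hM i j) (hRpos i j) ht, h, if_pos rfl]
          simp [hfun]
          ring_nf
          nlinarith []
        · rw [if_neg h]
          have := hfun_comb (hM i j) (hP0 i j) (hRpos i j).le ht.le ht1.le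
          simpa [hPt] using this
      calc ∑ i, ∑ j, hfun (M i j) (Pt i j)
          ≤ ∑ i, ∑ j, ((1 - t) * hfun (M i j) (P i j) + t * hfun (M i j) (R i j)
              + t * Real.log t * (if P i j = 0 then R i j else 0)) :=
            Finset.sum_le_sum fun i _ => Finset.sum_le_sum fun j _ => this i j
        _ = (1 - t) * (∑ i, ∑ j, hfun (M i j) (P i j))
            + t * (∑ i, ∑ j, hfun (M i j) (R i j))
            + t * Real.log t * (∑ i, ∑ j, (if P i j = 0 then R i j else 0)) := by
            simp only [Finset.sum_add_distrib, Finset.mul_sum]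
    have hmin := hPmin Pt hPtmem
    have hlt0 : Real.log t < 0 := Real.log_neg ht ht1
    nlinarith [hmin, hbound]
  set z : ℝ := -(klReal R M - klReal P M + 1) / S with hz
  set t : ℝ := min (1/2) (Real.exp z) with htdef
  have ht : 0 < t := lt_min (by norm_num) (Real.exp_pos z)
  have ht1 : t < 1 := lt_of_le_of_lt (min_le_left _ _) (by norm_num)
  have hlog : Real.log t ≤ z := by
    calc Real.log t ≤ Real.log (Real.exp z) :=
          Real.log_le_log ht (min_le_right _ _)
      _ = z := Real.log_exp z
  have := hkey t ht ht1
  have : 0 ≤ klReal R M - klReal P M + S * z := by nlinarith [hSpos]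
  rw [hz] at this
  have hSne : S ≠ 0 := hSpos.ne'
  field_simp at this
  linarith

lemma min_unique {n m : ℕ} (M : Matrix (Fin n) (Fin m) ℝ)
    (hM : ∀ i j, 0 < M i j) (r : Fin n → ℝ) (c : Fin m → ℝ)
    (P Q : Matrix (Fin n) (Fin m) ℝ)
    (hPK : P ∈ transportPolytope r c)
    (hPmin : ∀ W ∈ transportPolytope r c, klReal P M ≤ klReal W M)
    (hQK : Q ∈ transportPolytope r c)
    (hQmin : ∀ W ∈ transportPolytope r c, klReal Q M ≤ klReal W M) :
    P = Q := by
  by_contra hne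
  obtain ⟨i1, j1, hij⟩ : ∃ i j, P i j ≠ Q i j := by
    by_contra h; push_neg at h
    exact hne (by funext i j; exact h i j)
  set W : Matrix (Fin n) (Fin m) ℝ := fun i j => (P i j + Q i j) / 2 with hW
  have hWK : W ∈ transportPolytope r c := by
    refine ⟨fun i j => by
      have := hPK.1 i j; have := hQK.1 i j
      rw [hW]; dsimp only; linarith, fun i => ?_, fun j => ?_⟩
    · rw [hW]; dsimp only
      rw [show (∑ j, (P i j + Q i j) / 2) = ((∑ j, P i j) + ∑ j, Q i j) / 2 by
        rw [← Finset.sum_add_distrib, Finset.sum_div], hPK.2.1 i, hQK.2.1 i]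
      ring
    · rw [hW]; dsimp only
      rw [show (∑ i, (P i j + Q i j) / 2) = ((∑ i, P i j) + ∑ i, Q i j) / 2 by
        rw [← Finset.sum_add_distrib, Finset.sum_div], hPK.2.2 j, hQK.2.2 j]
      ring
  have hPQ : klReal P M = klReal Q M :=
    le_antisymm (hPmin Q hQK) (hQmin P hPK)
  have hstrict : klReal W M < klReal P M := by
    rw [klReal_eq, klReal_eq]
    have hle : ∀ i, ∑ j, hfun (M i j) (W i j)
        ≤ ∑ j, (hfun (M i j) (P i j) / 2 + hfun (M i j) (Q i j) / 2) := fun i =>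
      Finset.sum_le_sum fun j _ => hfun_mid_le (hM i j) (hPK.1 i j) (hQK.1 i j)
    have hlt : ∑ j, hfun (M i1 j) (W i1 j)
        < ∑ j, (hfun (M i1 j) (P i1 j) / 2 + hfun (M i1 j) (Q i1 j) / 2) := by
      refine Finset.sum_lt_sum
        (fun j _ => hfun_mid_le (hM i1 j) (hPK.1 i1 j) (hQK.1 i1 j))
        ⟨j1, mem_univ j1, hfun_strict (hM i1 j1) (hPK.1 i1 j1) (hQK.1 i1 j1) hij⟩
    have := Finset.sum_lt_sum (fun i (_ : i ∈ univ) => hle i) ⟨i1, mem_univ i1, hlt⟩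
    calc ∑ i, ∑ j, hfun (M i j) (W i j)
        < ∑ i, ∑ j, (hfun (M i j) (P i j) / 2 + hfun (M i j) (Q i j) / 2) := this
      _ = (∑ i, ∑ j, hfun (M i j) (P i j)) / 2 + (∑ i, ∑ j, hfun (M i j) (Q i j)) / 2 := by
          simp [Finset.sum_add_distrib, Finset.sum_div]
      _ = ∑ i, ∑ j, hfun (M i j) (P i j) := by
          have : (∑ i, ∑ j, hfun (M i j) (Q i j)) = ∑ i, ∑ j, hfun (M i j) (P i j) := by
            rw [← klReal_eq, ← klReal_eq, ← hPQ]
          rw [this]; ring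
  exact absurd (hPmin W hWK) (not_le.2 hstrict)

lemma four_point {n m : ℕ} (M : Matrix (Fin n) (Fin m) ℝ)
    (hM : ∀ i j, 0 < M i j) (r : Fin n → ℝ) (c : Fin m → ℝ)
    (P : Matrix (Fin n) (Fin m) ℝ) (hPK : P ∈ transportPolytope r c)
    (hPmin : ∀ Q ∈ transportPolytope r c, klReal P M ≤ klReal Q M)
    (hPpos : ∀ i j, 0 < P i j) [Nonempty (Fin n)] [Nonempty (Fin m)] :
    ∀ i i' j j', Real.log (P i j / M i j) + Real.log (P i' j' / M i' j')
      = Real.log (P i j' / M i j') + Real.log (P i' j / M i' j) := by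
  obtain ⟨hP0, hPr, hPc⟩ := hPK
  intro i i' j j'
  set L : Matrix (Fin n) (Fin m) ℝ := fun a b => Real.log (P a b / M a b) with hL
  set d1 : Fin n → ℝ := fun a => (if a = i then (1:ℝ) else 0) - (if a = i' then 1 else 0) with hd1
  set d2 : Fin m → ℝ := fun b => (if b = j then (1:ℝ) else 0) - (if b = j' then 1 else 0) with hd2
  set D : Matrix (Fin n) (Fin m) ℝ := fun a b => d1 a * d2 b with hD
  have hd1sum : ∑ a, d1 a = 0 := by simp [hd1, Finset.sum_sub_distrib]
  have hd2sum : ∑ b, d2 b = 0 := by simp [hd2, Finset.sum_sub_distrib]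
  have hd1abs : ∀ a, |d1 a| ≤ 1 := by
    intro a; rw [hd1]; dsimp only; split <;> split <;> norm_num
  have hd2abs : ∀ b, |d2 b| ≤ 1 := by
    intro b; rw [hd2]; dsimp only; split <;> split <;> norm_num
  have hDabs : ∀ a b, |D a b| ≤ 1 := by
    intro a b; rw [hD]; dsimp only; rw [abs_mul]
    calc |d1 a| * |d2 b| ≤ 1 * 1 := mul_le_mul (hd1abs a) (hd2abs b) (abs_nonneg _) one_pos.le
      _ = 1 := one_mul 1
  obtain ⟨δ, hδpos, hδle⟩ : ∃ δ > 0, ∀ a b, δ ≤ P a b := by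
    refine ⟨(Finset.univ ×ˢ Finset.univ).inf' (Finset.univ_nonempty.product Finset.univ_nonempty) (fun p : Fin n × Fin m => P p.1 p.2),
      ?_, fun a b => Finset.inf'_le (fun p : Fin n × Fin m => P p.1 p.2)
        (show ((a, b) : Fin n × Fin m) ∈ _ by simp)⟩
    rw [gt_iff_lt, Finset.lt_inf'_iff]
    exact fun p _ => hPpos p.1 p.2
  set g : ℝ → ℝ := fun t => ∑ a, ∑ b, hfun (M a b) (P a b + t * D a b) with hg
  have hmem : ∀ t : ℝ, |t| < δ → (fun a b => P a b + t * D a b) ∈ transportPolytope r c := by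
    intro t ht
    refine ⟨fun a b => ?_, fun a => ?_, fun b => ?_⟩
    · show 0 ≤ P a b + t * D a b
      have : |t * D a b| ≤ |t| := by
        rw [abs_mul]
        calc |t| * |D a b| ≤ |t| * 1 := mul_le_mul_of_nonneg_left (hDabs a b) (abs_nonneg t)
          _ = |t| := mul_one _
      have h2 := neg_abs_le (t * D a b)
      have := hδle a b
      linarith [neg_le_neg (le_of_lt ht)]
    · rw [Finset.sum_add_distrib, hPr a]
      have : ∑ b, t * D a b = t * d1 a * ∑ b, d2 b := by
        rw [Finset.mul_sum]; congr 1; funext b; rw [hD]; ring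
      rw [this, hd2sum, mul_zero, add_zero]
    · rw [Finset.sum_add_distrib, hPc b]
      have : ∑ a, t * D a b = t * d2 b * ∑ a, d1 a := by
        rw [Finset.mul_sum]; congr 1; funext a; rw [hD]; ring
      rw [this, hd1sum, mul_zero, add_zero]
  have hlocmin : IsLocalMin g 0 := by
    rw [IsLocalMin, IsMinFilter]
    rw [Metric.eventually_nhds_iff]
    refine ⟨δ, hδpos, fun t ht => ?_⟩
    rw [Real.dist_eq, sub_zero] at ht
    have h1 := hPmin _ (hmem t ht)
    have e0 : g 0 = klReal P M := by simp [hg, klReal_eq]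
    have e1 : g t = klReal (fun a b => P a b + t * D a b) M := by rfl
    rw [e0, e1]; exact h1
  have hderiv : HasDerivAt g (∑ a, ∑ b, D a b * (L a b + 1)) 0 := by
    apply HasDerivAt.fun_sum
    intro a _
    apply HasDerivAt.fun_sum
    intro b _
    have hinner : HasDerivAt (fun t : ℝ => P a b + t * D a b) (D a b) 0 := by
      simpa using ((hasDerivAt_id (0:ℝ)).mul_const (D a b)).const_add (P a b)
    have houter : HasDerivAt (hfun (M a b)) (L a b + 1) (P a b + 0 * D a b) := by
      have : P a b + 0 * D a b = P a b := by ring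
      rw [this, hL]
      exact hasDerivAt_hfun (hM a b) (hPpos a b)
    have := houter.comp 0 hinner
    simpa [mul_comm, Function.comp_def] using this
  have hzero : ∑ a, ∑ b, D a b * (L a b + 1) = 0 := hlocmin.hasDerivAt_eq_zero hderiv
  have hcompute : ∑ a, ∑ b, D a b * (L a b + 1)
      = (L i j + 1) - (L i j' + 1) - (L i' j + 1) + (L i' j' + 1) := by
    have hinner : ∀ a, ∑ b, D a b * (L a b + 1)
        = d1 a * ((L a j + 1) - (L a j' + 1)) := by
      intro a
      have e : ∀ b, D a b * (L a b + 1) = d1 a *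
          ((if b = j then (L a b + 1) else 0) - (if b = j' then (L a b + 1) else 0)) := by
        intro b; rw [hD, hd2]; dsimp only; split <;> split <;> ring
      simp only [e, ← Finset.mul_sum, Finset.sum_sub_distrib, Finset.sum_ite_eq',
        mem_univ, if_true]
    simp only [hinner]
    have e2 : ∀ a, d1 a * ((L a j + 1) - (L a j' + 1))
        = (if a = i then (L a j + 1) - (L a j' + 1) else 0)
          - (if a = i' then (L a j + 1) - (L a j' + 1) else 0) := by
      intro a; rw [hd1]; dsimp only; split <;> split <;> ring
    simp only [e2, Finset.sum_sub_distrib, Finset.sum_ite_eq', mem_univ, if_true]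
    ring
  rw [hcompute] at hzero
  rw [hL] at hzero
  dsimp only at hzero
  linarith

/-- For a strictly positive matrix `M` and strictly positive probability vectors `r`,
`c`, there is a unique minimizer `Φ(M,r,c)` of `D_KL(P‖M)` over `P ∈ U(r,c)`; moreover
this minimizer has strictly positive entries and is a diagonal scaling of `M`. -/
theorem exists_unique_kl_projection {n m : ℕ} (M : Matrix (Fin n) (Fin m) ℝ)
    (hM : ∀ i j, 0 < M i j) (r : Fin n → ℝ) (c : Fin m → ℝ)
    (hr : ∀ i, 0 < r i) (hc : ∀ j, 0 < c j)
    (hr1 : ∑ i, r i = 1) (hc1 : ∑ j, c j = 1) :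
    ∃ P : Matrix (Fin n) (Fin m) ℝ,
      (P ∈ transportPolytope r c ∧ ∀ Q ∈ transportPolytope r c, klReal P M ≤ klReal Q M) ∧
      (∀ P' : Matrix (Fin n) (Fin m) ℝ,
        (P' ∈ transportPolytope r c ∧
          ∀ Q ∈ transportPolytope r c, klReal P' M ≤ klReal Q M) → P' = P) ∧
      (∀ i j, 0 < P i j) ∧
      (∃ (u : Fin n → ℝ) (v : Fin m → ℝ), (∀ i, 0 < u i) ∧ (∀ j, 0 < v j) ∧
        ∀ i j, P i j = u i * M i j * v j) := by
  have hn : Nonempty (Fin n) := by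
    rcases Nat.eq_zero_or_pos n with h | h
    · subst h; simp at hr1
    · exact Fin.pos_iff_nonempty.mp h
  have hm' : Nonempty (Fin m) := by
    rcases Nat.eq_zero_or_pos m with h | h
    · subst h; simp at hc1
    · exact Fin.pos_iff_nonempty.mp h
  obtain ⟨P, hPK, hPmin⟩ := exists_min M hM r c hr hc hr1 hc1
  have hPpos : ∀ i j, 0 < P i j := minimizer_pos M hM r c hr hc hr1 hc1 P hPK hPmin
  refine ⟨P, ⟨hPK, hPmin⟩, ?_, hPpos, ?_⟩
  · rintro P' ⟨hP'K, hP'min⟩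
    exact min_unique M hM r c P' P hP'K hP'min hPK hPmin
  · have hfp := four_point M hM r c P hPK hPmin hPpos
    set L : Matrix (Fin n) (Fin m) ℝ := fun a b => Real.log (P a b / M a b) with hL
    set i0 : Fin n := Classical.arbitrary (Fin n)
    set j0 : Fin m := Classical.arbitrary (Fin m)
    refine ⟨fun i => Real.exp (L i j0 - L i0 j0), fun j => Real.exp (L i0 j),
      fun i => Real.exp_pos _, fun j => Real.exp_pos _, fun i j => ?_⟩
    have key : L i j0 + L i0 j = L i j + L i0 j0 := hfp i i0 j0 j
    have e1 : L i j0 - L i0 j0 + L i0 j = L i j := by linarith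
    have e3 : Real.exp (L i j) = P i j / M i j := by
      rw [hL]; exact Real.exp_log (div_pos (hPpos i j) (hM i j))
    show P i j = Real.exp (L i j0 - L i0 j0) * M i j * Real.exp (L i0 j)
    have e4 : Real.exp (L i j0 - L i0 j0) * Real.exp (L i0 j) = P i j / M i j := by
      rw [← Real.exp_add, e1, e3]
    have hMne : M i j ≠ 0 := (hM i j).ne'
    calc P i j = M i j * (P i j / M i j) := by field_simp
      _ = M i j * (Real.exp (L i j0 - L i0 j0) * Real.exp (L i0 j)) := by rw [e4]
      _ = Real.exp (L i j0 - L i0 j0) * M i j * Real.exp (L i0 j) := by ring
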